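/- Let G be a group acting by *-automorphisms on a unital C*-algebra A and let φ be a G-invariant state with covariant GNS quadruple (H_φ, π_φ, U_φ, ξ_φ). Then φ is extremal in the compact convex set of G-invariant states if and only if {π_φ(A) ∪ U_φ(G)}' = ℂ·1. -/

import Mathlib

open scoped ComplexOrder

/-- A state on a unital complex *-algebra, written as a plain function. -/
def IsStateOn {R : Type*} [Ring R] [Algebra ℂ R] [StarRing R] (f : R → ℂ) : Prop :=
  (∀ x y, f (x + y) = f x + f y) ∧ (∀ (c : ℂ) (x), f (c • x) = c * f x) ∧
    f 1 = 1 ∧ ∀ x, 0 ≤ f (star x * x)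

open ComplexConjugate

set_option linter.unusedSectionVars false
set_option maxHeartbeats 1000000

section stateAux
variable {R : Type*} [Ring R] [Algebra ℂ R] [StarRing R] [StarModule ℂ R] {f : R → ℂ}

lemma IsStateOn.map_zero' (hf : IsStateOn f) : f 0 = 0 := by
  have := hf.1 0 0
  simp only [add_zero] at this
  exact (left_eq_add.mp this)

lemma IsStateOn.map_neg' (hf : IsStateOn f) (x : R) : f (-x) = - f x := by
  have := hf.2.1 (-1) x
  simpa using this

lemma IsStateOn.map_sub' (hf : IsStateOn f) (x y : R) : f (x - y) = f x - f y := by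
  rw [sub_eq_add_neg, hf.1, hf.map_neg', sub_eq_add_neg]

lemma IsStateOn.im_zero (hf : IsStateOn f) (x : R) : (f (star x * x)).im = 0 := by
  have := hf.2.2.2 x
  rw [Complex.nonneg_iff] at this
  exact this.2.symm

lemma IsStateOn.re_nonneg (hf : IsStateOn f) (x : R) : 0 ≤ (f (star x * x)).re := by
  have := hf.2.2.2 x
  rw [Complex.nonneg_iff] at this
  exact this.1

private lemma expand_sq (hf : IsStateOn f) (x y : R) :
    f (star (x + y) * (x + y)) = f (star x * x) + f (star x * y) + f (star y * x)
      + f (star y * y) := by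
  rw [star_add, add_mul, mul_add, mul_add, hf.1, hf.1, hf.1]
  ring

lemma IsStateOn.conj_symm (hf : IsStateOn f) (a b : R) :
    f (star b * a) = conj (f (star a * b)) := by
  have h1 := expand_sq hf a b
  have h2 := expand_sq hf a (Complex.I • b)
  have e1 : star a * (Complex.I • b) = Complex.I • (star a * b) := mul_smul_comm _ _ _
  have e2 : star (Complex.I • b) * a = (-Complex.I) • (star b * a) := by
    rw [star_smul, smul_mul_assoc]
    simp [Complex.conj_I]
  have e3 : star (Complex.I • b) * (Complex.I • b) = star b * b := by
    rw [star_smul, smul_mul_assoc, mul_smul_comm, smul_smul]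
    simp [Complex.conj_I]
  rw [e1, e2, e3, hf.2.1, hf.2.1] at h2
  have i1 : (f (star a * b)).im + (f (star b * a)).im = 0 := by
    have h := congrArg Complex.im h1
    rw [hf.im_zero (a + b)] at h
    simp only [Complex.add_im, hf.im_zero a, hf.im_zero b] at h
    linarith
  have i2 : (f (star a * b)).re - (f (star b * a)).re = 0 := by
    have h := congrArg Complex.im h2
    rw [hf.im_zero (a + Complex.I • b)] at h
    simp only [Complex.add_im, Complex.mul_im, Complex.I_re, Complex.I_im, Complex.neg_re,
      Complex.neg_im, hf.im_zero a, hf.im_zero b] at h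
    linarith
  apply Complex.ext <;> simp [Complex.conj_re, Complex.conj_im] <;> linarith

private lemma expand_sub (hf : IsStateOn f) (x y : R) :
    f (star (x - y) * (x - y)) = f (star x * x) - f (star x * y) - f (star y * x)
      + f (star y * y) := by
  rw [star_sub, sub_mul, mul_sub, mul_sub, hf.map_sub', hf.map_sub', hf.map_sub']
  ring

private lemma re_calc (X Y u : ℂ) (s : ℝ) (hX : X.im = 0) (hY : Y.im = 0) :
    (X - (↑s * u) * conj u - ↑s * conj u * u + ↑s * conj u * (↑s * u) * Y).re
      = X.re - 2 * s * ‖u‖ ^ 2 + s ^ 2 * ‖u‖ ^ 2 * Y.re := by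
  have hn : ‖u‖ ^ 2 = u.re * u.re + u.im * u.im := by
    rw [Complex.sq_norm, Complex.normSq_apply]
  simp only [Complex.sub_re, Complex.add_re, Complex.mul_re, Complex.mul_im,
    Complex.ofReal_re, Complex.ofReal_im, Complex.conj_re, Complex.conj_im, hX, hY]
  rw [hn]
  ring

lemma IsStateOn.cauchySchwarz (hf : IsStateOn f) (a b : R) :
    ‖f (star b * a)‖ ^ 2 ≤ (f (star a * a)).re * (f (star b * b)).re := by
  have key : ∀ s : ℝ, 0 ≤ (f (star a * a)).re - 2 * s * ‖f (star b * a)‖ ^ 2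
      + s ^ 2 * ‖f (star b * a)‖ ^ 2 * (f (star b * b)).re := by
    intro s
    have h := expand_sub hf a (((s : ℂ) * f (star b * a)) • b)
    rw [mul_smul_comm] at h
    rw [show star ((((s : ℂ) * f (star b * a))) • b) * a
        = ((s : ℂ) * conj (f (star b * a))) • (star b * a) by
      rw [star_smul, smul_mul_assoc]; congr 1; simp] at h
    rw [show star ((((s : ℂ) * f (star b * a))) • b) * ((((s : ℂ) * f (star b * a))) • b)
        = (((s : ℂ) * conj (f (star b * a))) * ((s : ℂ) * f (star b * a))) • (star b * b) by
      rw [star_smul, smul_mul_assoc, mul_smul_comm, smul_smul]; congr 2; simp] at h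
    rw [hf.2.1, hf.2.1, hf.2.1, hf.conj_symm b a] at h
    have h0 := hf.re_nonneg (a - ((s : ℂ) * f (star b * a)) • b)
    rw [h, re_calc _ _ _ s (hf.im_zero a) (hf.im_zero b)] at h0
    exact h0
  have HA := hf.re_nonneg a
  have HB := hf.re_nonneg b
  set n := ‖f (star b * a)‖ ^ 2 with hndef
  set A := (f (star a * a)).re with hAdef
  set B := (f (star b * b)).re with hBdef
  have hn0 : 0 ≤ n := by positivity
  rcases eq_or_lt_of_le hn0 with hn1 | hn1
  · rw [← hn1]
    exact mul_nonneg HA HB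
  rcases eq_or_lt_of_le HB with hB0 | hB0
  · exfalso
    have hk := key ((A + 1) / n)
    rw [← hB0] at hk
    have e : A - 2 * ((A + 1) / n) * n + ((A + 1) / n) ^ 2 * n * 0 = A - 2 * (A + 1) := by
      field_simp
      ring
    rw [e] at hk
    linarith
  · have hk := key (1 / B)
    have hB' : B ≠ 0 := ne_of_gt hB0
    have e : A - 2 * (1 / B) * n + (1 / B) ^ 2 * n * B = A - n / B := by
      field_simp
      ring
    rw [e] at hk
    have h2 : n / B ≤ A := by linarith
    rw [div_le_iff₀ hB0] at h2
    linarith [h2]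

end stateAux

section densAux
variable {H : Type*} [NormedAddCommGroup H] [InnerProductSpace ℂ H]

lemma inner_zero_of_dense {s : Set H} (hs : Dense s) {x : H}
    (hx : ∀ y ∈ s, (inner ℂ x y : ℂ) = 0) : x = 0 := by
  have hcl : IsClosed {y : H | (inner ℂ x y : ℂ) = 0} :=
    isClosed_eq (continuous_const.inner continuous_id) continuous_const
  have hsub : closure s ⊆ {y : H | (inner ℂ x y : ℂ) = 0} :=
    closure_minimal (fun z hz => hx z hz) hcl
  rw [hs.closure_eq] at hsub
  exact inner_self_eq_zero.mp (hsub (Set.mem_univ x))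

lemma clm_ext_of_dense {s : Set H} (hs : Dense s) {S₁ S₂ : H →L[ℂ] H}
    (h : ∀ y ∈ s, S₁ y = S₂ y) : S₁ = S₂ :=
  ContinuousLinearMap.coeFn_injective <|
    Continuous.ext_on hs S₁.continuous S₂.continuous h
end densAux

lemma exists_gns_commutant_op
    (A : Type) [CStarAlgebra A]
    (H : Type) [NormedAddCommGroup H] [InnerProductSpace ℂ H] [CompleteSpace H]
    (π : A →⋆ₐ[ℂ] (H →L[ℂ] H)) (ξ : H)
    (hcyc : Dense {x : H | ∃ a, π a ξ = x})
    (ψ : A → ℂ) (hψ : IsStateOn ψ)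
    (C : ℝ) (hC : 0 ≤ C)
    (hbound : ∀ a b : A, ‖ψ (star b * a)‖ ≤ C * (‖π b ξ‖ * ‖π a ξ‖)) :
    ∃ T : H →L[ℂ] H, ∀ a b : A, (inner ℂ (π b ξ) (T (π a ξ)) : ℂ) = ψ (star b * a) := by
  classical
  -- the GNS map as a linear map
  set plinear : A →ₗ[ℂ] H :=
    { toFun := fun a => π a ξ
      map_add' := fun a b => by show π (a + b) ξ = π a ξ + π b ξ; rw [map_add]; rfl
      map_smul' := fun c a => by
        show π (c • a) ξ = c • π a ξ
        rw [map_smul]; rfl } with hplinear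
  set D : Submodule ℂ H := LinearMap.range plinear with hDdef
  have hDs : (D : Set H) = {x | ∃ a, π a ξ = x} := by
    ext x
    exact ⟨fun ⟨a, ha⟩ => ⟨a, ha⟩, fun ⟨a, ha⟩ => ⟨a, ha⟩⟩
  have hD : Dense (D : Set H) := by rw [hDs]; exact hcyc
  have hselex : ∀ y : D, ∃ a : A, π a ξ = (y : H) := fun y => y.2
  choose sel hsel using hselex
  -- vanishing on the kernel
  have hzero : ∀ (a c : A), π c ξ = 0 → ψ (star a * c) = 0 := by
    intro a c hc
    have hb := hbound c a
    rw [hc] at hb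
    simp only [norm_zero, mul_zero] at hb
    exact norm_le_zero_iff.mp hb
  have wd : ∀ (a b b' : A), π b ξ = π b' ξ → ψ (star a * b) = ψ (star a * b') := by
    intro a b b' hbb
    have h2 : π (b - b') ξ = 0 := by
      rw [map_sub]
      simp [ContinuousLinearMap.sub_apply, hbb]
    have h1 : ψ (star a * b) - ψ (star a * b') = ψ (star a * (b - b')) := by
      rw [mul_sub, hψ.map_sub']
    have := hzero a (b - b') h2
    rw [this] at h1
    exact sub_eq_zero.mp h1
  -- the functionals on D
  have flinbound : ∀ (a : A) (y : D), ‖ψ (star a * sel y)‖ ≤ C * ‖π a ξ‖ * ‖y‖ := by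
    intro a y
    have := hbound (sel y) a
    rw [hsel y] at this
    calc ‖ψ (star a * sel y)‖ ≤ C * (‖π a ξ‖ * ‖(y : H)‖) := this
      _ = C * ‖π a ξ‖ * ‖y‖ := by rw [mul_assoc]; rfl
  set flin : A → (D →ₗ[ℂ] ℂ) := fun a =>
    { toFun := fun y => ψ (star a * sel y)
      map_add' := fun y z => by
        show ψ (star a * sel (y + z)) = ψ (star a * sel y) + ψ (star a * sel z)
        have h1 : π (sel (y + z)) ξ = π (sel y + sel z) ξ := by
          rw [map_add, ContinuousLinearMap.add_apply, hsel, hsel, hsel]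
          rfl
        rw [wd a _ _ h1, mul_add, hψ.1]
      map_smul' := fun c y => by
        show ψ (star a * sel (c • y)) = c * ψ (star a * sel y)
        have h1 : π (sel (c • y)) ξ = π (c • sel y) ξ := by
          rw [map_smul, ContinuousLinearMap.smul_apply, hsel, hsel]
          rfl
        rw [wd a _ _ h1, mul_smul_comm, hψ.2.1] } with hflin
  set fc : A → (D →L[ℂ] ℂ) := fun a =>
    LinearMap.mkContinuous (flin a) (C * ‖π a ξ‖) (flinbound a) with hfc
  -- the inclusion D →L H
  set e : D →L[ℂ] H := D.subtypeL with he
  have hedense : DenseRange e := by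
    have : Set.range ⇑e = (D : Set H) := Subtype.range_val
    rw [DenseRange, this]
    exact hD
  have heui : IsUniformInducing ⇑e := by
    have : Isometry ⇑e := fun x y => rfl
    exact this.isUniformInducing
  -- extended functionals and Riesz vectors
  set F : A → (H →L[ℂ] ℂ) := fun a => (fc a).extend e with hF
  have hFa : ∀ a b : A, F a (π b ξ) = ψ (star a * b) := by
    intro a b
    have hmem : π b ξ ∈ D := ⟨b, rfl⟩
    have h1 : F a (e ⟨π b ξ, hmem⟩) = fc a ⟨π b ξ, hmem⟩ :=
      ContinuousLinearMap.extend_eq _ hedense heui _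
    have h2 : e (⟨π b ξ, hmem⟩ : D) = π b ξ := rfl
    rw [h2] at h1
    rw [h1]
    show ψ (star a * sel ⟨π b ξ, hmem⟩) = ψ (star a * b)
    exact wd a _ _ (hsel _)
  -- Riesz vectors
  set w : A → H := fun a => (InnerProductSpace.toDual ℂ H).symm (F a) with hwdef
  have hw : ∀ a b : A, (inner ℂ (w a) (π b ξ) : ℂ) = ψ (star a * b) := by
    intro a b
    rw [hwdef]
    rw [InnerProductSpace.toDual_symm_apply]
    exact hFa a b
  have hw' : ∀ a b : A, (inner ℂ (π b ξ) (w a) : ℂ) = ψ (star b * a) := by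
    intro a b
    rw [← inner_conj_symm, hw, ← hψ.conj_symm]
  -- w is well-defined w.r.t. the GNS map and linear
  have hwwd : ∀ c c' : A, π c ξ = π c' ξ → w c = w c' := by
    intro c c' hcc
    have hz : ∀ b : A, (inner ℂ (w c - w c') (π b ξ) : ℂ) = 0 := by
      intro b
      rw [inner_sub_left, hw, hw]
      have h2 : π (c - c') ξ = 0 := by
        rw [map_sub]; simp [ContinuousLinearMap.sub_apply, hcc]
      have h3 : ψ (star (c - c') * b) = 0 := by
        rw [hψ.conj_symm b (c - c'), hzero b (c - c') h2, map_zero]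
      have h4 : ψ (star c * b) - ψ (star c' * b) = ψ (star (c - c') * b) := by
        rw [star_sub, sub_mul, hψ.map_sub']
      rw [h3] at h4
      exact sub_eq_zero.mp h4 ▸ sub_self _
    have := inner_zero_of_dense hcyc (x := w c - w c') ?_
    · exact sub_eq_zero.mp this
    · rintro y ⟨b, rfl⟩
      exact hz b
  have hwadd : ∀ c c' : A, w (c + c') = w c + w c' := by
    intro c c'
    have hz : ∀ b : A, (inner ℂ (w (c + c') - (w c + w c')) (π b ξ) : ℂ) = 0 := by
      intro b
      rw [inner_sub_left, inner_add_left, hw, hw, hw, star_add, add_mul, hψ.1]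
      ring
    have := inner_zero_of_dense hcyc (x := w (c + c') - (w c + w c')) ?_
    · exact sub_eq_zero.mp this
    · rintro y ⟨b, rfl⟩
      exact hz b
  have hwsmul : ∀ (μ : ℂ) (c : A), w (μ • c) = μ • w c := by
    intro μ c
    have hz : ∀ b : A, (inner ℂ (w (μ • c) - μ • w c) (π b ξ) : ℂ) = 0 := by
      intro b
      rw [inner_sub_left, inner_smul_left, hw, hw]
      have : star (μ • c) * b = (starRingEnd ℂ) μ • (star c * b) := by
        rw [star_smul, smul_mul_assoc]
        rfl
      rw [this, hψ.2.1]
      ring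
    have := inner_zero_of_dense hcyc (x := w (μ • c) - μ • w c) ?_
    · exact sub_eq_zero.mp this
    · rintro y ⟨b, rfl⟩
      exact hz b
  -- norm bound on w
  have hwnorm : ∀ a : A, ‖w a‖ ≤ C * ‖π a ξ‖ := by
    intro a
    have hball : ∀ x : H, ‖(inner ℂ (w a) x : ℂ)‖ ≤ C * ‖π a ξ‖ * ‖x‖ := by
      have hcl : IsClosed {x : H | ‖(inner ℂ (w a) x : ℂ)‖ ≤ C * ‖π a ξ‖ * ‖x‖} :=
        isClosed_le ((continuous_const.inner continuous_id).norm)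
          (continuous_const.mul continuous_norm)
      have hsub : closure {x : H | ∃ b, π b ξ = x}
          ⊆ {x : H | ‖(inner ℂ (w a) x : ℂ)‖ ≤ C * ‖π a ξ‖ * ‖x‖} := by
        apply closure_minimal _ hcl
        rintro x ⟨b, rfl⟩
        simp only [Set.mem_setOf_eq]
        rw [hw]
        have := hbound b a
        calc ‖ψ (star a * b)‖ ≤ C * (‖π a ξ‖ * ‖π b ξ‖) := this
          _ = C * ‖π a ξ‖ * ‖π b ξ‖ := by ring
      intro x
      exact hsub (by rw [hcyc.closure_eq]; trivial)
    have h1 := hball (w a)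
    rw [inner_self_eq_norm_sq_to_K] at h1
    rw [norm_pow, RCLike.norm_ofReal, abs_norm] at h1
    rcases eq_or_lt_of_le (norm_nonneg (w a)) with h0 | h0
    · rw [← h0]
      positivity
    · nlinarith [h1, h0]
  -- the operator on D
  set Tlin : D →ₗ[ℂ] H :=
    { toFun := fun y => w (sel y)
      map_add' := fun y z => by
        show w (sel (y + z)) = w (sel y) + w (sel z)
        have h1 : π (sel (y + z)) ξ = π (sel y + sel z) ξ := by
          rw [map_add, ContinuousLinearMap.add_apply, hsel, hsel, hsel]
          rfl
        rw [hwwd _ _ h1, hwadd]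
      map_smul' := fun μ y => by
        show w (sel (μ • y)) = μ • w (sel y)
        have h1 : π (sel (μ • y)) ξ = π (μ • sel y) ξ := by
          rw [map_smul, ContinuousLinearMap.smul_apply, hsel, hsel]
          rfl
        rw [hwwd _ _ h1, hwsmul] } with hTlin
  have hTlinbound : ∀ y : D, ‖Tlin y‖ ≤ C * ‖y‖ := by
    intro y
    show ‖w (sel y)‖ ≤ C * ‖y‖
    calc ‖w (sel y)‖ ≤ C * ‖π (sel y) ξ‖ := hwnorm _
      _ = C * ‖y‖ := by rw [hsel]; rfl
  set TD : D →L[ℂ] H := LinearMap.mkContinuous Tlin C hTlinbound with hTD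
  set T : H →L[ℂ] H := TD.extend e with hT
  have hTa : ∀ a : A, T (π a ξ) = w a := by
    intro a
    have hmem : π a ξ ∈ D := ⟨a, rfl⟩
    have h1 : T (e ⟨π a ξ, hmem⟩) = TD ⟨π a ξ, hmem⟩ :=
      ContinuousLinearMap.extend_eq _ hedense heui _
    have h2 : e (⟨π a ξ, hmem⟩ : D) = π a ξ := rfl
    rw [h2] at h1
    rw [h1]
    show w (sel ⟨π a ξ, hmem⟩) = w a
    exact hwwd _ _ (hsel _)
  exact ⟨T, fun a b => by rw [hTa, hw']⟩

/-- Let `G` act on a unital C*-algebra `A` by *-automorphisms and let `φ` be a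
`G`-invariant state with covariant GNS representation `(H, π, U, ξ)`. Then `φ` is an extreme
point of the convex set of `G`-invariant states if and only if the commutant of
`π(A) ∪ U(G)` is trivial. -/
theorem deFinetti_stmt6
    (A : Type) [CStarAlgebra A]
    (G : Type) [Group G]
    (α : G → A ≃⋆ₐ[ℂ] A) (hα : ∀ g h a, α (g * h) a = α g (α h a))
    (H : Type) [NormedAddCommGroup H] [InnerProductSpace ℂ H] [CompleteSpace H]
    (π : A →⋆ₐ[ℂ] (H →L[ℂ] H)) (ξ : H) (hξ : ‖ξ‖ = 1)
    (φ : A → ℂ) (hφ : ∀ a, φ a = (inner ℂ ξ (π a ξ) : ℂ))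
    (hφstate : IsStateOn φ) (hφinv : ∀ g a, φ (α g a) = φ a)
    (hcyc : Dense {x : H | ∃ a, π a ξ = x})
    (U : G → (H →L[ℂ] H))
    (hUmul : ∀ g h, U (g * h) = U g * U h)
    (hUunitary : ∀ g, U g ∈ unitary (H →L[ℂ] H))
    (hUξ : ∀ g, U g ξ = ξ)
    (hcov : ∀ g a, U g * π a = π (α g a) * U g) :
    (∀ ψ₁ ψ₂ : A → ℂ,
        (IsStateOn ψ₁ ∧ ∀ g a, ψ₁ (α g a) = ψ₁ a) →
        (IsStateOn ψ₂ ∧ ∀ g a, ψ₂ (α g a) = ψ₂ a) →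
        ∀ t : ℝ, 0 < t → t < 1 →
          (∀ a, φ a = (t : ℂ) * ψ₁ a + ((1 : ℂ) - (t : ℂ)) * ψ₂ a) →
          ψ₁ = φ ∧ ψ₂ = φ) ↔
      (∀ T : H →L[ℂ] H, (∀ a, T * π a = π a * T) → (∀ g, T * U g = U g * T) →
        ∃ c : ℂ, T = c • (1 : H →L[ℂ] H)) := by
  classical
  -- ################ shared setup ################
  have hπadj : ∀ (a : A) (x y : H), (inner ℂ x (π a y) : ℂ) = inner ℂ (π (star a) x) y := by
    intro a x y
    rw [map_star, ContinuousLinearMap.star_eq_adjoint]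
    exact (ContinuousLinearMap.adjoint_inner_left (π a) y x).symm
  have hinner : ∀ a b : A, φ (star b * a) = (inner ℂ (π b ξ) (π a ξ) : ℂ) := by
    intro a b
    rw [hφ, map_mul, ContinuousLinearMap.mul_apply, hπadj, star_star]
  have hU1 : U 1 = 1 := by
    have h1 : U 1 * U 1 = U 1 := by rw [← hUmul]; norm_num
    have h2 : star (U 1) * U 1 = 1 := (Unitary.mem_iff.mp (hUunitary 1)).1
    calc U 1 = 1 * U 1 := (one_mul _).symm
      _ = (star (U 1) * U 1) * U 1 := by rw [h2]
      _ = star (U 1) * (U 1 * U 1) := by rw [mul_assoc]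
      _ = star (U 1) * U 1 := by rw [h1]
      _ = 1 := h2
  have hUstar : ∀ g, star (U g) = U g⁻¹ := by
    intro g
    have h3 : U g * U g⁻¹ = 1 := by rw [← hUmul, mul_inv_cancel, hU1]
    calc star (U g) = star (U g) * (U g * U g⁻¹) := by rw [h3, mul_one]
      _ = (star (U g) * U g) * U g⁻¹ := by rw [mul_assoc]
      _ = U g⁻¹ := by rw [(Unitary.mem_iff.mp (hUunitary g)).1, one_mul]
  have hα1 : ∀ a, α 1 a = a := by
    intro a
    have := hα 1 1 a
    rw [one_mul] at this
    exact (α 1).injective this.symm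
  have hαinv : ∀ g a, α g (α g⁻¹ a) = a := by
    intro g a
    rw [← hα, mul_inv_cancel, hα1]
  have hcovξ : ∀ g a, π (α g a) ξ = U g (π a ξ) := by
    intro g a
    have := congrArg (fun S : H →L[ℂ] H => S ξ) (hcov g a)
    simp only [ContinuousLinearMap.mul_apply] at this
    rw [hUξ] at this
    exact this.symm
  have hφre : ∀ a : A, (φ (star a * a)).re = ‖π a ξ‖ ^ 2 := by
    intro a
    rw [hinner a a]
    exact inner_self_eq_norm_sq (𝕜 := ℂ) _
  constructor
  · -- extreme ⇒ trivial commutant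
    intro hext T hTπ hTU
    -- star S commutes whenever S does
    have hstarcomm : ∀ S : H →L[ℂ] H, (∀ a, S * π a = π a * S) → (∀ g, S * U g = U g * S) →
        (∀ a, star S * π a = π a * star S) ∧ (∀ g, star S * U g = U g * star S) := by
      intro S hSπ hSU
      constructor
      · intro a
        have h := congrArg star (hSπ (star a))
        rw [star_mul, star_mul, map_star, star_star] at h
        exact h.symm
      · intro g
        have h := congrArg star (hSU g⁻¹)
        rw [star_mul, star_mul, hUstar, inv_inv] at h
        exact h.symm
    -- key claim: self-adjoint elements of the commutant are real scalars
    have key : ∀ S : H →L[ℂ] H, (∀ a, S * π a = π a * S) → (∀ g, S * U g = U g * S) →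
        star S = S → ∃ r : ℝ, S = (r : ℂ) • 1 := by
      intro S hSπ hSU hSsa
      set c : ℝ := ‖S‖ + 1 with hc
      have hc0 : 0 < c := by positivity
      have hSnorm : ‖S‖ < c := by rw [hc]; linarith
      set S' : H →L[ℂ] H := ((1 / (2 * c) : ℝ) : ℂ) • (S + ((c : ℝ) : ℂ) • 1) with hS'
      have hS'π : ∀ a, S' * π a = π a * S' := by
        intro a
        rw [hS']
        simp only [smul_mul_assoc, mul_smul_comm, add_mul, mul_add, one_mul, mul_one, hSπ a]
      have hS'U : ∀ g, S' * U g = U g * S' := by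
        intro g
        rw [hS']
        simp only [smul_mul_assoc, mul_smul_comm, add_mul, mul_add, one_mul, mul_one, hSU g]
      have hS'sa : star S' = S' := by
        rw [hS']
        simp only [star_smul, star_add, star_one, star_smul, hSsa, Complex.conj_ofReal,
          RCLike.star_def]
      -- quadratic form facts
      have hSb : ∀ x : H, |(inner ℂ x (S x) : ℂ).re| ≤ ‖S‖ * ‖x‖ ^ 2 := by
        intro x
        calc |(inner ℂ x (S x) : ℂ).re| ≤ ‖(inner ℂ x (S x) : ℂ)‖ := Complex.abs_re_le_norm _
          _ ≤ ‖x‖ * ‖S x‖ := norm_inner_le_norm _ _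
          _ ≤ ‖x‖ * (‖S‖ * ‖x‖) := by
            have := S.le_opNorm x
            have := norm_nonneg x
            nlinarith
          _ = ‖S‖ * ‖x‖ ^ 2 := by ring
      have him : ∀ (W : H →L[ℂ] H), star W = W → ∀ x : H, (inner ℂ x (W x) : ℂ).im = 0 := by
        intro W hW x
        have h1 : conj (inner ℂ x (W x) : ℂ) = inner ℂ x (W x) := by
          rw [inner_conj_symm]
          calc (inner ℂ (W x) x : ℂ) = inner ℂ x (ContinuousLinearMap.adjoint W x) := by
                rw [ContinuousLinearMap.adjoint_inner_right]
            _ = inner ℂ x (W x) := by rw [← ContinuousLinearMap.star_eq_adjoint, hW]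
        exact Complex.conj_eq_iff_im.mp h1
      have hS'x : ∀ x : H, (inner ℂ x (S' x) : ℂ)
          = ((1 / (2 * c) : ℝ) : ℂ) * ((inner ℂ x (S x) : ℂ) + ((c : ℝ) : ℂ) * (inner ℂ x x : ℂ)) := by
        intro x
        rw [hS']
        simp only [ContinuousLinearMap.smul_apply, ContinuousLinearMap.add_apply,
          ContinuousLinearMap.one_apply, inner_smul_right, inner_add_right]
      have hre : ∀ x : H, (inner ℂ x (S' x) : ℂ).re
          = (1 / (2 * c)) * ((inner ℂ x (S x) : ℂ).re + c * ‖x‖ ^ 2) := by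
        intro x
        rw [hS'x]
        have hxx1 : (inner ℂ x x : ℂ).re = ‖x‖ ^ 2 := inner_self_eq_norm_sq (𝕜 := ℂ) x
        have hxx2 : (inner ℂ x x : ℂ).im = 0 := inner_self_im (𝕜 := ℂ) x
        simp only [Complex.mul_re, Complex.add_re, Complex.add_im, Complex.mul_im,
          Complex.ofReal_re, Complex.ofReal_im, hxx1, hxx2]
        ring
      have hlow : ∀ x : H, 0 ≤ (inner ℂ x (S' x) : ℂ).re := by
        intro x
        rw [hre]
        have h1 := hSb x
        have h2 : (0:ℝ) ≤ ‖x‖ ^ 2 := by positivity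
        have h3 : (0:ℝ) < 1 / (2 * c) := by positivity
        nlinarith [abs_le.mp h1]
      have hup : ∀ x : H, (inner ℂ x (S' x) : ℂ).re ≤ ‖x‖ ^ 2 := by
        intro x
        rw [hre]
        have h1 := hSb x
        have h2 : (0:ℝ) ≤ ‖x‖ ^ 2 := by positivity
        have h3 : (0:ℝ) < 1 / (2 * c) := by positivity
        have h4 := abs_le.mp h1
        rw [div_mul_eq_mul_div, one_mul, div_le_iff₀ (by positivity : (0:ℝ) < 2 * c)]
        nlinarith [h4.2]
      set t : ℝ := (inner ℂ ξ (S' ξ) : ℂ).re with htdef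
      have ht0 : 0 < t := by
        rw [htdef, hre, hξ]
        have h1 := (abs_le.mp (hSb ξ)).1
        rw [hξ] at h1
        have h3 : (0:ℝ) < 1 / (2 * c) := by positivity
        nlinarith
      have ht1 : t < 1 := by
        rw [htdef, hre, hξ]
        have h1 := (abs_le.mp (hSb ξ)).2
        rw [hξ] at h1
        rw [div_mul_eq_mul_div, one_mul, div_lt_iff₀ (by positivity : (0:ℝ) < 2 * c)]
        nlinarith
      have htC : (inner ℂ ξ (S' ξ) : ℂ) = (t : ℂ) := by
        apply Complex.ext
        · simp [htdef]
        · simp [him S' hS'sa ξ]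
      have htne : (t : ℂ) ≠ 0 := by
        simp only [ne_eq, Complex.ofReal_eq_zero]
        exact ht0.ne'
      have h1tne : ((1 : ℂ) - (t : ℂ)) ≠ 0 := by
        rw [sub_ne_zero]
        intro hh
        have : (1 : ℝ) = t := by exact_mod_cast hh
        linarith
      -- pointwise commutation of S' with π
      have hS'πx : ∀ (a : A) (x : H), S' (π a x) = π a (S' x) := by
        intro a x
        have := congrArg (fun W : H →L[ℂ] H => W x) (hS'π a)
        simpa only [ContinuousLinearMap.mul_apply] using this
      have hS'Ux : ∀ (g : G) (x : H), S' (U g x) = U g (S' x) := by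
        intro g x
        have := congrArg (fun W : H →L[ℂ] H => W x) (hS'U g)
        simpa only [ContinuousLinearMap.mul_apply] using this
      -- the competing states
      set ψa : A → ℂ := fun a => (inner ℂ ξ (S' (π a ξ)) : ℂ) / (t : ℂ) with hψa
      set ψb : A → ℂ := fun a => (φ a - (t : ℂ) * ψa a) / ((1 : ℂ) - (t : ℂ)) with hψb
      have hkey : ∀ a : A, (inner ℂ ξ (S' (π (star a * a) ξ)) : ℂ)
          = inner ℂ (π a ξ) (S' (π a ξ)) := by
        intro a
        have e1 : π (star a * a) ξ = π (star a) (π a ξ) := by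
          rw [map_mul]; rfl
        rw [e1, hS'πx (star a), hπadj (star a) ξ, star_star]
      have hψaadd : ∀ x y : A, ψa (x + y) = ψa x + ψa y := by
        intro x y
        rw [hψa]
        simp only [map_add, ContinuousLinearMap.add_apply, inner_add_right]
        rw [add_div]
      have hψasmul : ∀ (μ : ℂ) (x : A), ψa (μ • x) = μ * ψa x := by
        intro μ x
        rw [hψa]
        simp only [map_smul, ContinuousLinearMap.smul_apply, inner_smul_right]
        rw [mul_div_assoc]
      have hψaone : ψa 1 = 1 := by
        rw [hψa]
        simp only [map_one, ContinuousLinearMap.one_apply]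
        rw [htC, div_self htne]
      have hψapos : ∀ a : A, 0 ≤ ψa (star a * a) := by
        intro a
        rw [hψa]
        simp only
        rw [hkey a, Complex.nonneg_iff]
        constructor
        · rw [Complex.div_ofReal_re]
          exact div_nonneg (hlow _) ht0.le
        · rw [Complex.div_ofReal_im, him S' hS'sa]
          simp
      have hψastate : IsStateOn ψa := ⟨hψaadd, hψasmul, hψaone, hψapos⟩
      have hψainv : ∀ g a, ψa (α g a) = ψa a := by
        intro g a
        rw [hψa]
        simp only
        rw [hcovξ g a, hS'Ux g]
        have e1 : (inner ℂ ξ (U g (S' (π a ξ))) : ℂ) = inner ℂ ξ (S' (π a ξ)) := by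
          rw [← ContinuousLinearMap.adjoint_inner_left (U g), ← ContinuousLinearMap.star_eq_adjoint,
            hUstar, hUξ]
        rw [e1]
      have hψbadd : ∀ x y : A, ψb (x + y) = ψb x + ψb y := by
        intro x y
        rw [hψb]
        simp only
        rw [hφstate.1, hψaadd]
        ring
      have hψbsmul : ∀ (μ : ℂ) (x : A), ψb (μ • x) = μ * ψb x := by
        intro μ x
        rw [hψb]
        simp only
        rw [hφstate.2.1, hψasmul]
        ring
      have hψbone : ψb 1 = 1 := by
        rw [hψb]
        simp only
        rw [hφstate.2.2.1, hψaone, mul_one, div_self h1tne]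
      have hψbpos : ∀ a : A, 0 ≤ ψb (star a * a) := by
        intro a
        rw [hψb]
        simp only
        have e1 : (t : ℂ) * ψa (star a * a) = inner ℂ (π a ξ) (S' (π a ξ)) := by
          rw [hψa]
          simp only
          rw [hkey a, mul_div_cancel₀ _ htne]
        rw [e1, hinner]
        rw [Complex.nonneg_iff]
        have e3 : ((1 : ℂ) - (t : ℂ)) = ((1 - t : ℝ) : ℂ) := by push_cast; ring
        rw [e3]
        have hxx1 : (inner ℂ (π a ξ) (π a ξ) : ℂ).re = ‖π a ξ‖ ^ 2 :=
          inner_self_eq_norm_sq (𝕜 := ℂ) _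
        have hxx2 : (inner ℂ (π a ξ) (π a ξ) : ℂ).im = 0 := inner_self_im (𝕜 := ℂ) _
        constructor
        · rw [Complex.div_ofReal_re]
          apply div_nonneg _ (by linarith)
          rw [Complex.sub_re, hxx1]
          have := hup (π a ξ)
          linarith
        · rw [Complex.div_ofReal_im, Complex.sub_im, hxx2, him S' hS'sa]
          simp
      have hψbstate : IsStateOn ψb := ⟨hψbadd, hψbsmul, hψbone, hψbpos⟩
      have hψbinv : ∀ g a, ψb (α g a) = ψb a := by
        intro g a
        rw [hψb]
        simp only
        rw [hφinv, hψainv]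
      have hdec : ∀ a, φ a = (t : ℂ) * ψa a + ((1 : ℂ) - (t : ℂ)) * ψb a := by
        intro a
        rw [hψb]
        field_simp
        ring
      obtain ⟨hψaφ, -⟩ := hext ψa ψb ⟨hψastate, hψainv⟩ ⟨hψbstate, hψbinv⟩ t ht0 ht1 hdec
      -- conclude S' = t • 1
      have hSc : ∀ a : A, (inner ℂ ξ (S' (π a ξ)) : ℂ) = (t : ℂ) * inner ℂ ξ (π a ξ) := by
        intro a
        have := congrFun hψaφ a
        rw [hψa] at this
        simp only at this
        rw [hφ] at this
        field_simp at this
        rw [this]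
      set R : H →L[ℂ] H := S' - (t : ℂ) • 1 with hR
      have hRπx : ∀ (a : A) (x : H), R (π a x) = π a (R x) := by
        intro a x
        rw [hR]
        simp only [ContinuousLinearMap.sub_apply, ContinuousLinearMap.smul_apply,
          ContinuousLinearMap.one_apply, hS'πx a, map_sub, map_smul]
      have hRz : ∀ a : A, (inner ℂ ξ (R (π a ξ)) : ℂ) = 0 := by
        intro a
        rw [hR]
        simp only [ContinuousLinearMap.sub_apply, ContinuousLinearMap.smul_apply,
          ContinuousLinearMap.one_apply, inner_sub_right, inner_smul_right]
        rw [hSc a, sub_self]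
      have hRab : ∀ a b : A, (inner ℂ (π b ξ) (R (π a ξ)) : ℂ) = 0 := by
        intro a b
        have e1 : (inner ℂ (π b ξ) (R (π a ξ)) : ℂ) = inner ℂ ξ (π (star b) (R (π a ξ))) := by
          rw [hπadj (star b) ξ, star_star]
        have e2 : π (star b) (π a ξ) = π (star b * a) ξ := by rw [map_mul]; rfl
        rw [e1, ← hRπx (star b), e2, hRz]
      have hR0 : R = 0 := by
        apply clm_ext_of_dense hcyc
        rintro y ⟨a, rfl⟩
        rw [ContinuousLinearMap.zero_apply]
        apply inner_zero_of_dense hcyc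
        rintro z ⟨b, rfl⟩
        rw [← inner_conj_symm, hRab a b, map_zero]
      have hS'eq : S' = (t : ℂ) • 1 := by
        have h := hR0
        rw [hR] at h
        exact sub_eq_zero.mp h
      -- solve for S
      refine ⟨2 * c * t - c, ?_⟩
      have hcoef : ((2 * c : ℝ) : ℂ) * ((1 / (2 * c) : ℝ) : ℂ) = 1 := by
        push_cast
        field_simp
      have h2 : ((2 * c : ℝ) : ℂ) • S' = ((2 * c : ℝ) : ℂ) • ((t : ℂ) • (1 : H →L[ℂ] H)) := by
        rw [hS'eq]
      rw [hS', smul_smul, hcoef, one_smul, smul_smul] at h2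
      have h5 : S = (((2 * c : ℝ) : ℂ) * (t : ℂ)) • 1 - ((c : ℝ) : ℂ) • (1 : H →L[ℂ] H) :=
        eq_sub_of_add_eq h2
      rw [h5, ← sub_smul]
      congr 1
      push_cast
      ring
    -- apply the key claim to the real and imaginary parts of T
    have hT' := hstarcomm T hTπ hTU
    set S₁ : H →L[ℂ] H := (1 / 2 : ℂ) • (T + star T) with hS₁
    set S₂ : H →L[ℂ] H := (Complex.I / 2) • (star T - T) with hS₂
    have hS₁π : ∀ a, S₁ * π a = π a * S₁ := by
      intro a
      rw [hS₁]
      simp only [smul_mul_assoc, mul_smul_comm, add_mul, mul_add, hTπ a, hT'.1 a]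
    have hS₁U : ∀ g, S₁ * U g = U g * S₁ := by
      intro g
      rw [hS₁]
      simp only [smul_mul_assoc, mul_smul_comm, add_mul, mul_add, hTU g, hT'.2 g]
    have hS₂π : ∀ a, S₂ * π a = π a * S₂ := by
      intro a
      rw [hS₂]
      simp only [smul_mul_assoc, mul_smul_comm, sub_mul, mul_sub, hTπ a, hT'.1 a]
    have hS₂U : ∀ g, S₂ * U g = U g * S₂ := by
      intro g
      rw [hS₂]
      simp only [smul_mul_assoc, mul_smul_comm, sub_mul, mul_sub, hTU g, hT'.2 g]
    have hS₁sa : star S₁ = S₁ := by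
      rw [hS₁]
      rw [star_smul, star_add, star_star]
      congr 1
      · simp
      · abel
    have hS₂sa : star S₂ = S₂ := by
      rw [hS₂]
      rw [star_smul, star_sub, star_star]
      have e1 : star (Complex.I / 2) = -(Complex.I / 2) := by
        simp [Complex.ext_iff]
        norm_num
      rw [e1, neg_smul, ← smul_neg]
      congr 1
      abel
    obtain ⟨r₁, hr₁⟩ := key S₁ hS₁π hS₁U hS₁sa
    obtain ⟨r₂, hr₂⟩ := key S₂ hS₂π hS₂U hS₂sa
    refine ⟨(r₁ : ℂ) + Complex.I * (r₂ : ℂ), ?_⟩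
    have hTdec : T = S₁ + Complex.I • S₂ := by
      rw [hS₁, hS₂, smul_smul]
      have e1 : Complex.I * (Complex.I / 2) = -(1 / 2) := by
        rw [div_eq_mul_inv, ← mul_assoc, Complex.I_mul_I]
        ring
      rw [e1]
      module
    rw [hTdec, hr₁, hr₂, smul_smul, ← add_smul]
  · -- trivial commutant ⇒ extreme
    intro hcom ψ₁ ψ₂ hψ₁p hψ₂p t ht0 ht1 hdec
    obtain ⟨hψ₁, hψ₁inv⟩ := hψ₁p
    obtain ⟨hψ₂, hψ₂inv⟩ := hψ₂p
    -- domination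
    have hdom : ∀ a : A, (ψ₁ (star a * a)).re ≤ (1 / t) * ‖π a ξ‖ ^ 2 := by
      intro a
      have h1 := congrArg Complex.re (hdec (star a * a))
      rw [hφre] at h1
      simp only [Complex.add_re, Complex.mul_re, Complex.sub_re, Complex.sub_im,
        Complex.ofReal_re, Complex.ofReal_im, Complex.one_re, Complex.one_im] at h1
      have h2 := hψ₂.re_nonneg a
      have h3 := hψ₁.im_zero a
      have h4 := hψ₂.im_zero a
      rw [h3, h4] at h1
      have h5 : ‖π a ξ‖ ^ 2 = t * (ψ₁ (star a * a)).re + (1 - t) * (ψ₂ (star a * a)).re := by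
        rw [h1]; ring
      have h6 : t * (ψ₁ (star a * a)).re ≤ ‖π a ξ‖ ^ 2 := by nlinarith
      rw [one_div, inv_mul_eq_div, le_div_iff₀ ht0]
      linarith
    have hbound : ∀ a b : A, ‖ψ₁ (star b * a)‖ ≤ (1 / t) * (‖π b ξ‖ * ‖π a ξ‖) := by
      intro a b
      have h1 := hψ₁.cauchySchwarz a b
      have h2 := hdom a
      have h3 := hdom b
      have h4 := hψ₁.re_nonneg a
      have h5 := hψ₁.re_nonneg b
      have ht0' : 0 < 1 / t := by positivity
      have h6 : ‖ψ₁ (star b * a)‖ ^ 2 ≤ ((1 / t) * (‖π b ξ‖ * ‖π a ξ‖)) ^ 2 := by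
        calc ‖ψ₁ (star b * a)‖ ^ 2 ≤ (ψ₁ (star a * a)).re * (ψ₁ (star b * b)).re := h1
          _ ≤ (1 / t * ‖π a ξ‖ ^ 2) * (1 / t * ‖π b ξ‖ ^ 2) :=
            mul_le_mul h2 h3 h5 (by positivity)
          _ = ((1 / t) * (‖π b ξ‖ * ‖π a ξ‖)) ^ 2 := by ring
      have hR : 0 ≤ 1 / t * (‖π b ξ‖ * ‖π a ξ‖) := by positivity
      nlinarith [h6, hR, norm_nonneg (ψ₁ (star b * a))]
    obtain ⟨T, hT⟩ := exists_gns_commutant_op A H π ξ hcyc ψ₁ hψ₁ (1 / t)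
      (by positivity) hbound
    -- T commutes with π
    have hTπ : ∀ c : A, T * π c = π c * T := by
      intro c
      apply clm_ext_of_dense hcyc
      rintro y ⟨a, rfl⟩
      simp only [ContinuousLinearMap.mul_apply]
      have hz : ∀ b : A, (inner ℂ (π b ξ) (T (π c (π a ξ))) : ℂ)
          = inner ℂ (π b ξ) (π c (T (π a ξ))) := by
        intro b
        have e1 : π c (π a ξ) = π (c * a) ξ := by rw [map_mul]; rfl
        rw [e1, hT (c * a) b, hπadj c, ← ContinuousLinearMap.mul_apply, ← map_mul,
          hT a (star c * b)]
        rw [star_mul, star_star, mul_assoc]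
      have hdiff : ∀ b : A, (inner ℂ (T (π c (π a ξ)) - π c (T (π a ξ))) (π b ξ) : ℂ) = 0 := by
        intro b
        rw [← inner_conj_symm, inner_sub_right, hz b, sub_self, map_zero]
      have := inner_zero_of_dense hcyc (x := T (π c (π a ξ)) - π c (T (π a ξ)))
        (by rintro y ⟨b, rfl⟩; exact hdiff b)
      exact sub_eq_zero.mp this
    -- T commutes with U
    have hTU : ∀ g : G, T * U g = U g * T := by
      intro g
      apply clm_ext_of_dense hcyc
      rintro y ⟨a, rfl⟩
      simp only [ContinuousLinearMap.mul_apply]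
      have hz : ∀ b : A, (inner ℂ (π b ξ) (T (U g (π a ξ))) : ℂ)
          = inner ℂ (π b ξ) (U g (T (π a ξ))) := by
        intro b
        have e1 : U g (π a ξ) = π (α g a) ξ := (hcovξ g a).symm
        have e2 : (inner ℂ (π b ξ) (U g (T (π a ξ))) : ℂ)
            = inner ℂ (π (α g⁻¹ b) ξ) (T (π a ξ)) := by
          rw [← ContinuousLinearMap.adjoint_inner_left (U g), ← ContinuousLinearMap.star_eq_adjoint,
            hUstar, hcovξ g⁻¹ b]
        rw [e1, e2, hT a (α g⁻¹ b), hT (α g a) b]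
        have e3 : star b * α g a = α g (star (α g⁻¹ b) * a) := by
          rw [map_mul, map_star, hαinv]
        rw [e3, hψ₁inv]
      have hdiff : ∀ b : A, (inner ℂ (T (U g (π a ξ)) - U g (T (π a ξ))) (π b ξ) : ℂ) = 0 := by
        intro b
        rw [← inner_conj_symm, inner_sub_right, hz b, sub_self, map_zero]
      have := inner_zero_of_dense hcyc (x := T (U g (π a ξ)) - U g (T (π a ξ)))
        (by rintro y ⟨b, rfl⟩; exact hdiff b)
      exact sub_eq_zero.mp this
    obtain ⟨μ, hμ⟩ := hcom T hTπ hTU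
    have hψφ : ∀ a b : A, ψ₁ (star b * a) = μ * φ (star b * a) := by
      intro a b
      rw [← hT a b, hμ, hinner]
      simp only [ContinuousLinearMap.smul_apply, ContinuousLinearMap.one_apply,
        inner_smul_right]
    have hμ1 : μ = 1 := by
      have := hψφ 1 1
      rw [star_one, one_mul, hψ₁.2.2.1, hφstate.2.2.1, mul_one] at this
      exact this.symm
    have hψ₁φ : ψ₁ = φ := by
      funext a
      have := hψφ a 1
      rw [star_one, one_mul, hμ1, one_mul] at this
      exact this
    refine ⟨hψ₁φ, ?_⟩
    funext a
    have h1 := hdec a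
    rw [hψ₁φ] at h1
    have h1t : ((1 : ℂ) - (t : ℂ)) ≠ 0 := by
      rw [sub_ne_zero]
      intro hh
      have : (t : ℝ) = 1 := by exact_mod_cast hh.symm
      linarith
    have h2 : ((1 : ℂ) - (t : ℂ)) * ψ₂ a = ((1 : ℂ) - (t : ℂ)) * φ a := by
      linear_combination -h1
    exact mul_left_cancel₀ h1t h2
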